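/- Let K₀ > 0 and F₀ > 0, and set a₀ := (F₀/K₀)^{1/3}. Suppose λ : [0,∞) → ℝ is differentiable, positive, satisfies λ(0) = 1 and λ'(t) = -(2/3)·K₀ + (2/3)·F₀·λ(t)⁻³ for all t ≥ 0. Then the scalar curvature R(t) := 2·K₀·λ(t)⁻¹ - (1/2)·F₀·λ(t)⁻⁴ converges to (3/2)·K₀·a₀⁻¹ as t → ∞. -/

import Mathlib

open Set Filter

/-- If `u` has nonpositive right derivative on `[0,∞)`, it is antitone there. -/
lemma auxAntitoneOn_of_derivWithin_nonpos {u u' : ℝ → ℝ}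
    (hu : ∀ t ∈ Set.Ici (0:ℝ), HasDerivWithinAt u (u' t) (Set.Ici 0) t)
    (hu' : ∀ t ∈ Set.Ici (0:ℝ), u' t ≤ 0) : AntitoneOn u (Set.Ici 0) := by
  apply antitoneOn_of_deriv_nonpos (convex_Ici 0)
  · exact fun t ht => (hu t ht).continuousWithinAt
  · intro t ht
    rw [interior_Ici] at ht
    exact ((hu t (Set.mem_Ici.2 (Set.mem_Ioi.1 ht).le)).hasDerivAt (Ici_mem_nhds ht)).differentiableAt.differentiableWithinAt
  · intro t ht
    rw [interior_Ici] at ht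
    rw [((hu t (Set.mem_Ici.2 (Set.mem_Ioi.1 ht).le)).hasDerivAt (Ici_mem_nhds ht)).deriv]
    exact hu' t (Set.mem_Ici.2 (Set.mem_Ioi.1 ht).le)

/-- For `K₀ > 0`, `F₀ > 0` and `a₀ = (F₀/K₀)^{1/3}`, along any positive
solution of the reduced normalized ODE on `[0,∞)` with `λ(0) = 1`, the scalar curvature
`R(t) = 2K₀ λ(t)⁻¹ - (1/2)F₀ λ(t)⁻⁴` converges to `(3/2)K₀ a₀⁻¹` as `t → ∞`. -/
theorem stmt_6 (K₀ F₀ : ℝ) (hK₀ : 0 < K₀) (hF₀ : 0 < F₀) (a₀ : ℝ)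
    (ha₀ : a₀ = (F₀ / K₀) ^ ((1:ℝ)/3))
    (lam : ℝ → ℝ) (hpos : ∀ t ∈ Set.Ici (0:ℝ), 0 < lam t) (hl0 : lam 0 = 1)
    (hode : ∀ t ∈ Set.Ici (0:ℝ),
      HasDerivWithinAt lam (-(2/3) * K₀ + (2/3) * F₀ * ((lam t)^3)⁻¹) (Set.Ici 0) t) :
    Filter.Tendsto (fun t => 2 * K₀ * (lam t)⁻¹ - (1/2) * F₀ * ((lam t)^4)⁻¹)
      Filter.atTop (nhds ((3/2) * K₀ * a₀⁻¹)) := by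
  have hdiv : 0 < F₀ / K₀ := div_pos hF₀ hK₀
  have hc : 0 < a₀ := ha₀ ▸ Real.rpow_pos_of_pos hdiv _
  have hc3 : a₀ ^ 3 = F₀ / K₀ := by
    rw [ha₀, ← Real.rpow_natCast ((F₀ / K₀) ^ ((1:ℝ)/3)) 3, ← Real.rpow_mul hdiv.le]
    norm_num
  have hF : F₀ = K₀ * a₀ ^ 3 := by rw [hc3]; field_simp
  -- the squared distance to the equilibrium
  set h : ℝ → ℝ := fun t => (lam t - a₀) ^ 2 with hh
  -- key algebraic identity for the derivative of `h`
  have key : ∀ x : ℝ, 0 < x →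
      2 * (lam 0 - lam 0 + (x - a₀)) * (-(2/3) * K₀ + (2/3) * F₀ * (x ^ 3)⁻¹)
        = -(4/3 * K₀ * ((x ^ 2 + x * a₀ + a₀ ^ 2) / x ^ 3)) * (x - a₀) ^ 2 := by
    intro x hx
    rw [hF]
    field_simp
    ring
  have key' : ∀ x : ℝ, 0 < x →
      2 * (x - a₀) * (-(2/3) * K₀ + (2/3) * F₀ * (x ^ 3)⁻¹)
        = -(4/3 * K₀ * ((x ^ 2 + x * a₀ + a₀ ^ 2) / x ^ 3)) * (x - a₀) ^ 2 := by
    intro x hx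
    have := key x hx
    simpa using this
  -- derivative of `h`
  have hderh : ∀ t ∈ Set.Ici (0:ℝ),
      HasDerivWithinAt h
        (2 * (lam t - a₀) * (-(2/3) * K₀ + (2/3) * F₀ * ((lam t) ^ 3)⁻¹)) (Set.Ici 0) t := by
    intro t ht
    have := ((hode t ht).sub_const a₀).pow 2
    have e : h = (fun x => lam x - a₀) ^ 2 := by funext x; simp [hh]
    rw [e]
    exact this.congr_deriv (by norm_num)
  have hfac_nonneg : ∀ t ∈ Set.Ici (0:ℝ),
      0 ≤ 4/3 * K₀ * (((lam t) ^ 2 + lam t * a₀ + a₀ ^ 2) / (lam t) ^ 3) := by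
    intro t ht
    have hx := hpos t ht
    have h1 : 0 ≤ (lam t) ^ 2 + lam t * a₀ + a₀ ^ 2 := by positivity
    have h2 : (0:ℝ) < (lam t) ^ 3 := by positivity
    positivity
  have hnonpos : ∀ t ∈ Set.Ici (0:ℝ),
      2 * (lam t - a₀) * (-(2/3) * K₀ + (2/3) * F₀ * ((lam t) ^ 3)⁻¹) ≤ 0 := by
    intro t ht
    rw [key' (lam t) (hpos t ht)]
    have := hfac_nonneg t ht
    nlinarith [sq_nonneg (lam t - a₀)]
  -- `h` is antitone on `[0,∞)`
  have hanti : AntitoneOn h (Set.Ici 0) :=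
    auxAntitoneOn_of_derivWithin_nonpos hderh hnonpos
  -- uniform upper bound for `lam`
  set M : ℝ := a₀ + |1 - a₀| with hM
  have hMpos : 0 < M := by
    have : 0 ≤ |1 - a₀| := abs_nonneg _
    linarith
  have hbound : ∀ t ∈ Set.Ici (0:ℝ), lam t ≤ M := by
    intro t ht
    have h1 : h t ≤ h 0 := hanti (le_refl (0:ℝ)) ht ht
    have h2 : |lam t - a₀| ≤ |1 - a₀| := by
      have := Real.sqrt_le_sqrt h1
      rwa [hh, Real.sqrt_sq_eq_abs, Real.sqrt_sq_eq_abs, hl0] at this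
    have := (abs_le.1 h2).2
    linarith
  -- decay rate
  set k₀ : ℝ := 4/3 * K₀ * (a₀ ^ 2 / M ^ 3) with hk₀
  have hk₀pos : 0 < k₀ := by positivity
  have hdecay : ∀ t ∈ Set.Ici (0:ℝ),
      2 * (lam t - a₀) * (-(2/3) * K₀ + (2/3) * F₀ * ((lam t) ^ 3)⁻¹) ≤ -k₀ * h t := by
    intro t ht
    rw [key' (lam t) (hpos t ht)]
    have hx := hpos t ht
    have hxM := hbound t ht
    have hr : a₀ ^ 2 / M ^ 3 ≤ ((lam t) ^ 2 + lam t * a₀ + a₀ ^ 2) / (lam t) ^ 3 := by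
      have h1 : a₀ ^ 2 / M ^ 3 ≤ a₀ ^ 2 / (lam t) ^ 3 := by
        apply div_le_div_of_nonneg_left (by positivity) (by positivity)
        exact pow_le_pow_left₀ hx.le hxM 3
      have h2 : a₀ ^ 2 / (lam t) ^ 3 ≤ ((lam t) ^ 2 + lam t * a₀ + a₀ ^ 2) / (lam t) ^ 3 := by
        apply div_le_div_of_nonneg_right ?_ (by positivity)
        nlinarith
      linarith
    have hsq : (0:ℝ) ≤ (lam t - a₀) ^ 2 := sq_nonneg _
    have h5 := mul_le_mul_of_nonneg_right hr hsq
    have hK : (0:ℝ) ≤ 4/3 * K₀ := by linarith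
    rw [hk₀, hh]
    nlinarith [mul_le_mul_of_nonneg_left h5 hK]
  -- limit of `h`
  set H : ℝ → ℝ := fun t => h (max t 0) with hH
  have Hanti : Antitone H := by
    intro s t hst
    exact hanti (le_max_right s 0) (le_max_right t 0) (max_le_max hst le_rfl)
  have Hbdd : BddBelow (Set.range H) := by
    refine ⟨0, ?_⟩
    rintro y ⟨t, rfl⟩
    exact sq_nonneg _
  have HtendL : Filter.Tendsto H Filter.atTop (nhds (⨅ t, H t)) :=
    tendsto_atTop_ciInf Hanti Hbdd
  set L : ℝ := ⨅ t, H t with hL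
  have hHeq : H =ᶠ[Filter.atTop] h := by
    filter_upwards [Filter.eventually_ge_atTop (0:ℝ)] with t ht
    simp [hH, max_eq_left ht]
  have htendL : Filter.Tendsto h Filter.atTop (nhds L) := HtendL.congr' hHeq
  have hL0 : 0 ≤ L := le_ciInf fun t => sq_nonneg _
  have hLle : ∀ t, L ≤ H t := fun t => ciInf_le Hbdd t
  -- L must be 0
  have hLzero : L = 0 := by
    by_contra hne
    have hLpos : 0 < L := lt_of_le_of_ne hL0 (Ne.symm hne)
    -- φ t = h t + k₀ L t is antitone on [0,∞)
    have hφder : ∀ t ∈ Set.Ici (0:ℝ),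
        HasDerivWithinAt (fun t => h t + k₀ * L * t)
          (2 * (lam t - a₀) * (-(2/3) * K₀ + (2/3) * F₀ * ((lam t) ^ 3)⁻¹) + k₀ * L)
          (Set.Ici 0) t := by
      intro t ht
      exact (hderh t ht).add (by
        simpa using (hasDerivWithinAt_id t (Set.Ici 0)).const_mul (k₀ * L))
    have hφanti : AntitoneOn (fun t => h t + k₀ * L * t) (Set.Ici 0) := by
      apply auxAntitoneOn_of_derivWithin_nonpos hφder
      intro t ht
      have hd := hdecay t ht
      have hht : L ≤ h t := by
        have := hLle t
        simpa [hH, max_eq_left (Set.mem_Ici.1 ht)] using this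
      nlinarith [mul_nonneg hk₀pos.le (sub_nonneg.2 hht)]
    -- contradiction at a large time
    set T : ℝ := (h 0 + 1) / (k₀ * L) with hT
    have hkl : 0 < k₀ * L := mul_pos hk₀pos hLpos
    have hTpos : 0 < T := by
      apply div_pos ?_ hkl
      have : (0:ℝ) ≤ h 0 := sq_nonneg _
      linarith
    have h1 : h T + k₀ * L * T ≤ h 0 + k₀ * L * 0 :=
      hφanti (le_refl (0:ℝ)) hTpos.le hTpos.le
    have h2 : k₀ * L * T = h 0 + 1 := by
      rw [hT]
      field_simp
    have h3 : (0:ℝ) ≤ h T := sq_nonneg _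
    rw [h2] at h1
    linarith
  rw [hLzero] at htendL
  -- hence `lam → a₀`
  have hlamlim : Filter.Tendsto lam Filter.atTop (nhds a₀) := by
    rw [tendsto_iff_dist_tendsto_zero]
    have : Filter.Tendsto (fun t => Real.sqrt (h t)) Filter.atTop (nhds (Real.sqrt 0)) :=
      (Real.continuous_sqrt.tendsto 0).comp htendL
    rw [Real.sqrt_zero] at this
    refine this.congr fun t => ?_
    rw [hh, Real.sqrt_sq_eq_abs, Real.dist_eq]
  -- conclude by continuity
  have hane : a₀ ≠ 0 := hc.ne'
  have h4ne : a₀ ^ 4 ≠ 0 := pow_ne_zero _ hane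
  have hR : Filter.Tendsto (fun t => 2 * K₀ * (lam t)⁻¹ - (1/2) * F₀ * ((lam t) ^ 4)⁻¹)
      Filter.atTop (nhds (2 * K₀ * a₀⁻¹ - (1/2) * F₀ * (a₀ ^ 4)⁻¹)) := by
    apply Filter.Tendsto.sub
    · exact (tendsto_const_nhds.mul (hlamlim.inv₀ hane))
    · exact (tendsto_const_nhds.mul ((hlamlim.pow 4).inv₀ h4ne))
  convert hR using 2
  rw [hF]
  field_simp
  ring
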